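/- Every nearly symmetric word in two positive definite letters has only positive eigenvalues: if W = S1 S2 is a juxtaposition of two symmetric words S1 and S2 (one possibly empty), then for all real symmetric positive definite matrices A and B, all eigenvalues of W(A,B) are positive. -/

import Mathlib

open Matrix ComplexOrder

/-- Evaluate a word over `{A,B}` (`false ↦ A`, `true ↦ B`) at two matrices. -/
def wordEval {n : Type*} [Fintype n] [DecidableEq n]
    (w : List Bool) (A B : Matrix n n ℝ) : Matrix n n ℝ :=
  (w.map (fun c => if c then B else A)).prod

section Aux

variable {n : Type*} [Fintype n] [DecidableEq n]

lemma wordEval_nil (A B : Matrix n n ℝ) : wordEval [] A B = 1 := rfl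

lemma wordEval_cons (c : Bool) (w : List Bool) (A B : Matrix n n ℝ) :
    wordEval (c :: w) A B = (if c then B else A) * wordEval w A B := by
  simp [wordEval]

lemma wordEval_append (w₁ w₂ : List Bool) (A B : Matrix n n ℝ) :
    wordEval (w₁ ++ w₂) A B = wordEval w₁ A B * wordEval w₂ A B := by
  simp [wordEval]

/-- Congruence of a positive definite matrix by a positive definite (hence hermitian,
invertible) matrix is positive definite. -/
lemma posDef_conj {𝕜 : Type*} [RCLike 𝕜] {M N : Matrix n n 𝕜}
    (hM : M.PosDef) (hN : N.PosDef) : (N * M * N).PosDef := by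
  refine PosDef.of_dotProduct_mulVec_pos ?_ ?_
  · have h : (N * M * N)ᴴ = Nᴴ * Mᴴ * Nᴴ := by
      rw [conjTranspose_mul, conjTranspose_mul, ← mul_assoc]
    rw [IsHermitian, h, hM.isHermitian.eq, hN.isHermitian.eq]
  · intro x hx
    have hNx : N *ᵥ x ≠ 0 := by
      intro h
      have := hM.2 -- dummy
      have h2 := hN.dotProduct_mulVec_pos hx
      rw [h, dotProduct_zero] at h2
      exact lt_irrefl _ h2
    have key : star x ⬝ᵥ (N * M * N) *ᵥ x = star (N *ᵥ x) ⬝ᵥ M *ᵥ (N *ᵥ x) := by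
      rw [star_mulVec, hN.isHermitian.eq, ← mulVec_mulVec, ← mulVec_mulVec,
        dotProduct_mulVec (star x) N]
    rw [key]
    exact hM.dotProduct_mulVec_pos hNx

/-- The evaluation of a palindrome at two positive definite real matrices is
positive definite. -/
lemma palindrome_wordEval_posDef {w : List Bool} (hw : w.reverse = w)
    (A B : Matrix n n ℝ) (hA : A.PosDef) (hB : B.PosDef) :
    (wordEval w A B).PosDef := by
  have hp := List.Palindrome.of_reverse_eq hw
  clear hw
  induction hp with
  | nil => exact Matrix.PosDef.one
  | singleton x =>
    cases x
    · simpa [wordEval] using hA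
    · simpa [wordEval] using hB
  | cons_concat x _ ih =>
    rw [wordEval_cons, wordEval_append]
    have hC : (if x then B else A).PosDef := by cases x <;> simpa
    have : wordEval [x] A B = (if x then B else A) := by simp [wordEval]
    rw [this, ← mul_assoc]
    exact posDef_conj ih hC

open scoped MatrixOrder in
/-- A positive definite real matrix maps to a positive definite complex matrix. -/
lemma posDef_map_complex {M : Matrix n n ℝ} (hM : M.PosDef) :
    (M.map (algebraMap ℝ ℂ)).PosDef := by
  set S := CFC.sqrt M with hS
  have hsqrt : S * S = M := CFC.sqrt_mul_sqrt_self M hM.posSemidef.nonneg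
  have hSherm : S.IsHermitian := (CFC.sqrt_nonneg M).posSemidef.isHermitian
  set N := S.map (algebraMap ℝ ℂ) with hN
  have hNherm : N.IsHermitian := by
    apply hSherm.map
    intro r
    simp [Complex.ext_iff]
  have hMN : M.map (algebraMap ℝ ℂ) = Nᴴ * N := by
    rw [hNherm.eq, hN, ← Matrix.map_mul, hsqrt]
  have hdetS : S.det ≠ 0 := by
    intro h
    have : M.det = S.det * S.det := by rw [← hsqrt, det_mul]
    rw [h, mul_zero] at this
    exact (ne_of_gt hM.det_pos) this
  have hdetN : N.det = algebraMap ℝ ℂ S.det := by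
    rw [hN, ← RingHom.mapMatrix_apply, ← RingHom.map_det]
  have hNunit : IsUnit N := by
    rw [Matrix.isUnit_iff_isUnit_det, hdetN]
    simpa using hdetS
  have hNinj : Function.Injective (N.mulVec) := mulVec_injective_iff_isUnit.2 hNunit
  have hps : (Nᴴ * N).PosSemidef := posSemidef_conjTranspose_mul_self N
  rw [hMN]
  refine PosDef.of_dotProduct_mulVec_pos hps.isHermitian fun x hx => ?_
  refine lt_of_le_of_ne (hps.dotProduct_mulVec_nonneg x) ?_
  intro h
  have hNx : N *ᵥ x ≠ 0 := fun h' => hx (hNinj (by simpa using h'))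
  have : star x ⬝ᵥ (Nᴴ * N) *ᵥ x = star (N *ᵥ x) ⬝ᵥ (N *ᵥ x) := by
    rw [← mulVec_mulVec, dotProduct_mulVec, star_mulVec]
  rw [this] at h
  exact hNx (by rwa [eq_comm, dotProduct_star_self_eq_zero] at h)

end Aux

/-- Every nearly symmetric word (a juxtaposition of two palindromes) in two
positive definite letters has only positive eigenvalues. -/
theorem nearly_symmetric_word_pos_eigenvalues {n : Type*} [Fintype n] [DecidableEq n]
    (S1 S2 : List Bool) (h1 : S1.reverse = S1) (h2 : S2.reverse = S2)
    (A B : Matrix n n ℝ) (hA : A.PosDef) (hB : B.PosDef) :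
    ∀ μ ∈ spectrum ℂ ((wordEval (S1 ++ S2) A B).map (algebraMap ℝ ℂ)),
      μ.im = 0 ∧ 0 < μ.re := by
  intro μ hμ
  have hP : (wordEval S1 A B).PosDef := palindrome_wordEval_posDef h1 A B hA hB
  have hQ : (wordEval S2 A B).PosDef := palindrome_wordEval_posDef h2 A B hA hB
  set P := (wordEval S1 A B).map (algebraMap ℝ ℂ) with hPdef
  set Q := (wordEval S2 A B).map (algebraMap ℝ ℂ) with hQdef
  have hP' : P.PosDef := posDef_map_complex hP
  have hQ' : Q.PosDef := posDef_map_complex hQ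
  have hsplit : (wordEval (S1 ++ S2) A B).map (algebraMap ℝ ℂ) = P * Q := by
    rw [wordEval_append, Matrix.map_mul]
  rw [hsplit] at hμ
  -- extract an eigenvector
  rw [← AlgEquiv.spectrum_eq (Matrix.toLinAlgEquiv' (R := ℂ) (n := n)),
    ← Module.End.hasEigenvalue_iff_mem_spectrum] at hμ
  obtain ⟨v, hv⟩ := hμ.exists_hasEigenvector
  have hv0 : v ≠ 0 := hv.right
  have heig : (P * Q) *ᵥ v = μ • v := by
    have := hv.apply_eq_smul
    rwa [show (Matrix.toLinAlgEquiv' (P * Q) : (n → ℂ) →ₗ[ℂ] (n → ℂ)) = Matrix.toLin' (P * Q) from rfl,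
      Matrix.toLin'_apply] at this
  -- inner product argument
  set w := Q *ᵥ v with hw
  have hd2 : (0 : ℂ) < star v ⬝ᵥ Q *ᵥ v := hQ'.dotProduct_mulVec_pos hv0
  have hw0 : w ≠ 0 := by
    intro h
    rw [hw] at h
    rw [h, dotProduct_zero] at hd2
    exact lt_irrefl _ hd2
  have hd1 : (0 : ℂ) < star w ⬝ᵥ P *ᵥ w := hP'.dotProduct_mulVec_pos hw0
  have hkey : star w ⬝ᵥ P *ᵥ w = μ * (star v ⬝ᵥ Q *ᵥ v) := by
    have e1 : P *ᵥ w = μ • v := by rw [hw, mulVec_mulVec]; exact heig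
    rw [e1, dotProduct_smul, hw, star_mulVec, hQ'.isHermitian.eq, ← dotProduct_mulVec]
    simp [smul_eq_mul]
  set d1 := star w ⬝ᵥ P *ᵥ w with hd1def
  set d2 := star v ⬝ᵥ Q *ᵥ v with hd2def
  obtain ⟨hr1, hi1⟩ := Complex.lt_def.mp hd1
  obtain ⟨hr2, hi2⟩ := Complex.lt_def.mp hd2
  simp only [Complex.zero_re, Complex.zero_im] at hr1 hi1 hr2 hi2
  have hd2ne : d2 ≠ 0 := ne_of_gt hd2
  have hμval : μ = d1 / d2 := by
    field_simp [hkey]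
    exact hkey.symm
  rw [hμval]
  rw [Complex.div_re, Complex.div_im, ← hi1, ← hi2]
  constructor
  · simp [← hi1, ← hi2]
  · have hnsq : 0 < Complex.normSq d2 := Complex.normSq_pos.mpr hd2ne
    simp only [← hi1, ← hi2, mul_zero, zero_div, add_zero, zero_mul]
    positivity
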